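/- Let Δ ⊂ ℝⁿ be a compact convex polytope with 0 in its interior and l its Ricci affine function. Define I_l(g) = -g(0) + ∫_Δ g l dy for convex functions g on Δ. Then I_l(g) ≥ 0 for every integrable convex function g if and only if l ≥ 0 on Δ; and in that case I_l(g) = 0 holds only when g is affine on Δ (assuming l is not identically zero on any open subset, i.e. l > 0 on a set of full measure or l > 0 on the interior). -/

import Mathlib

open MeasureTheory

section RelDingAux

open Set

private lemma aff_comb {n : ℕ} (a : Fin n → ℝ) (c : ℝ) (x y : Fin n → ℝ) {p q : ℝ}
    (hpq : p + q = 1) :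
    (∑ i, a i * (p • x + q • y) i) + c
      = p * ((∑ i, a i * x i) + c) + q * ((∑ i, a i * y i) + c) := by
  have h1 : ∑ i, a i * (p • x + q • y) i
      = p * (∑ i, a i * x i) + q * (∑ i, a i * y i) := by
    rw [Finset.mul_sum, Finset.mul_sum, ← Finset.sum_add_distrib]
    refine Finset.sum_congr rfl fun i _ => ?_
    simp only [Pi.add_apply, Pi.smul_apply, smul_eq_mul]; ring
  rw [h1]
  linear_combination (-c) * hpq

private lemma aff_continuous {n : ℕ} (a : Fin n → ℝ) (c : ℝ) :
    Continuous (fun y : Fin n → ℝ => (∑ i, a i * y i) + c) :=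
  (continuous_finset_sum _ fun i _ => continuous_const.mul (continuous_apply i)).add
    continuous_const

private lemma exists_support {n : ℕ} {Δ : Set (Fin n → ℝ)} (hΔconv : Convex ℝ Δ)
    (h0 : (0 : Fin n → ℝ) ∈ interior Δ) {g : (Fin n → ℝ) → ℝ} (hg : ConvexOn ℝ Δ g) :
    ∃ a : Fin n → ℝ, ∀ y ∈ Δ, g 0 + (∑ i, a i * y i) ≤ g y := by
  set D := interior Δ with hD
  have hDo : IsOpen D := isOpen_interior
  have hDconv : Convex ℝ D := hΔconv.interior
  have hgD : ConvexOn ℝ D g := hg.subset interior_subset hDconv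
  have hgc : ContinuousOn g D := hgD.continuousOn hDo
  set S : Set ((Fin n → ℝ) × ℝ) :=
    (D ×ˢ (univ : Set ℝ)) ∩ (fun p : (Fin n → ℝ) × ℝ => p.2 - g p.1) ⁻¹' Ioi 0 with hS
  have hF : ContinuousOn (fun p : (Fin n → ℝ) × ℝ => p.2 - g p.1) (D ×ˢ (univ : Set ℝ)) :=
    continuous_snd.continuousOn.sub (hgc.comp continuous_fst.continuousOn fun p hp => hp.1)
  have hSopen : IsOpen S := hF.isOpen_inter_preimage (hDo.prod isOpen_univ) isOpen_Ioi
  have hSmem : ∀ p : (Fin n → ℝ) × ℝ, p ∈ S ↔ p.1 ∈ D ∧ g p.1 < p.2 := by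
    intro p
    simp [hS, sub_pos]
  have hSconv : Convex ℝ S := by
    intro p hp q hq u v hu hv huv
    rw [hSmem] at hp hq ⊢
    refine ⟨hDconv hp.1 hq.1 hu hv huv, ?_⟩
    have h1 : g (u • p.1 + v • q.1) ≤ u * g p.1 + v * g q.1 := hgD.2 hp.1 hq.1 hu hv huv
    have h2 : u * g p.1 + v * g q.1 < u * p.2 + v * q.2 := by
      rcases eq_or_lt_of_le hu with h | h
      · have hv1 : v = 1 := by linarith
        have := hq.2
        simp [← h, hv1]
        linarith
      · rcases eq_or_lt_of_le hv with h' | h'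
        · have hu1 : u = 1 := by linarith
          have := hp.2
          simp [← h', hu1]
          linarith
        · have := hp.2; have := hq.2
          nlinarith
    calc g ((u • p + v • q).1) = g (u • p.1 + v • q.1) := rfl
      _ ≤ u * g p.1 + v * g q.1 := h1
      _ < u * p.2 + v * q.2 := h2
      _ = (u • p + v • q).2 := rfl
  have h0S : ((0 : Fin n → ℝ), g 0) ∉ S := by
    rw [hSmem]; rintro ⟨-, h⟩; exact lt_irrefl _ h
  obtain ⟨f, hf⟩ := geometric_hahn_banach_point_open hSconv hSopen h0S
  set β : ℝ := f ((0 : Fin n → ℝ), (1 : ℝ)) with hβdef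
  have hsplit : ∀ (y : Fin n → ℝ) (t : ℝ), f (y, t) = f (y, 0) + t * β := by
    intro y t
    have h : (y, t) = (y, (0 : ℝ)) + t • ((0 : Fin n → ℝ), (1 : ℝ)) := by
      simp [Prod.ext_iff]
    rw [h, map_add, f.map_smul, smul_eq_mul, hβdef]
  have hf00 : f ((0 : Fin n → ℝ), (0 : ℝ)) = 0 := map_zero f
  have hβ : 0 < β := by
    have h1 : ((0 : Fin n → ℝ), g 0 + 1) ∈ S := by
      rw [hSmem]; exact ⟨h0, by show g 0 < g 0 + 1; linarith⟩
    have h2 := hf _ h1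
    rw [hsplit 0 (g 0), hsplit 0 (g 0 + 1), hf00] at h2
    linarith
  have key : ∀ y ∈ D, g 0 * β ≤ f (y, 0) + g y * β := by
    intro y hy
    by_contra hlt
    push_neg at hlt
    set ε : ℝ := (g 0 * β - (f (y, 0) + g y * β)) / (2 * β) with hε
    have hεpos : 0 < ε := div_pos (by linarith) (by linarith)
    have hyS : (y, g y + ε) ∈ S := by
      rw [hSmem]; exact ⟨hy, by show g y < g y + ε; linarith⟩
    have h2 := hf _ hyS
    rw [hsplit 0 (g 0), hsplit y (g y + ε), hf00] at h2
    have hεβ : ε * β = (g 0 * β - (f (y, 0) + g y * β)) / 2 := by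
      rw [hε, div_mul_eq_mul_div, mul_div_mul_right _ _ hβ.ne']
    nlinarith
  set A : Fin n → ℝ := fun i => -(f (Pi.single i 1, 0)) / β with hA
  have hfz : ∀ z : Fin n → ℝ, f (z, 0) = ∑ i, z i * f (Pi.single i 1, 0) := by
    intro z
    have hz : (z, (0 : ℝ)) = ∑ i, z i • ((Pi.single i 1 : Fin n → ℝ), (0 : ℝ)) := by
      rw [Prod.ext_iff]
      constructor
      · rw [Prod.fst_sum]
        simp only [Prod.smul_mk]
        rw [show (fun i => z i • (Pi.single i 1 : Fin n → ℝ)) = fun i => Pi.single i (z i) from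
          funext fun i => by rw [← Pi.single_smul, smul_eq_mul, mul_one]]
        exact (Finset.univ_sum_single z).symm
      · rw [Prod.snd_sum]
        simp
    rw [hz, map_sum]
    exact Finset.sum_congr rfl fun i _ => by rw [f.map_smul, smul_eq_mul]
  have hlin : ∀ z : Fin n → ℝ, (∑ i, A i * z i) = -(f (z, 0)) / β := by
    intro z
    calc ∑ i, A i * z i = ∑ i, (z i * f (Pi.single i 1, 0)) * (-1 / β) :=
          Finset.sum_congr rfl fun i _ => by rw [hA]; ring
      _ = (∑ i, z i * f (Pi.single i 1, 0)) * (-1 / β) := by rw [Finset.sum_mul]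
      _ = -(f (z, 0)) / β := by rw [hfz]; ring
  have hint : ∀ z ∈ D, g 0 + (∑ i, A i * z i) ≤ g z := by
    intro z hz
    rw [hlin z]
    have h2 := key z hz
    rw [← sub_nonneg]
    have h3 : g z - (g 0 + -(f (z, 0)) / β) = ((f (z, 0) + g z * β) - g 0 * β) / β := by
      field_simp; ring
    rw [h3]
    exact div_nonneg (by linarith) hβ.le
  refine ⟨A, fun y hy => ?_⟩
  have hz : (2⁻¹ : ℝ) • y ∈ D := by
    refine hΔconv.openSegment_self_interior_subset_interior hy h0 ?_
    exact ⟨2⁻¹, 2⁻¹, by norm_num, by norm_num, by norm_num, by simp⟩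
  have h1 : g ((2⁻¹ : ℝ) • y) ≤ 2⁻¹ * g 0 + 2⁻¹ * g y := by
    have := hg.2 (interior_subset h0) hy (by norm_num : (0:ℝ) ≤ 2⁻¹)
      (by norm_num : (0:ℝ) ≤ 2⁻¹) (by norm_num)
    simpa using this
  have h2 := hint _ hz
  have h3 : (∑ i, A i * ((2⁻¹ : ℝ) • y) i) = 2⁻¹ * ∑ i, A i * y i := by
    rw [Finset.mul_sum]
    exact Finset.sum_congr rfl fun i _ => by
      simp only [Pi.smul_apply, smul_eq_mul]; ring
  rw [h3] at h2
  linarith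

private lemma integral_aff {n : ℕ} {Δ : Set (Fin n → ℝ)} (hΔc : IsCompact Δ)
    {l : (Fin n → ℝ) → ℝ} (hlc : Continuous l)
    (hl1 : ∫ y in Δ, l y = 1) (hlm : ∀ i : Fin n, ∫ y in Δ, y i * l y = 0)
    (a : Fin n → ℝ) (c : ℝ) :
    ∫ y in Δ, ((∑ i, a i * y i) + c) * l y = c := by
  have hmi : ∀ i : Fin n, IntegrableOn (fun y : Fin n → ℝ => y i * l y) Δ := fun i =>
    (((continuous_apply i).mul hlc).continuousOn).integrableOn_compact hΔc
  have hli : IntegrableOn l Δ := hlc.continuousOn.integrableOn_compact hΔc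
  simp_rw [add_mul, Finset.sum_mul, mul_assoc]
  rw [integral_add (integrable_finset_sum _ fun i _ => ((hmi i).const_mul (a i)))
    (hli.const_mul c)]
  rw [integral_finset_sum _ fun i _ => ((hmi i).const_mul (a i))]
  have h1 : ∀ i : Fin n, ∫ y in Δ, a i * (y i * l y) = 0 := fun i => by
    rw [integral_const_mul, hlm i, mul_zero]
  have h2 : ∫ y in Δ, c * l y = c := by rw [integral_const_mul, hl1, mul_one]
  simp [h1, h2]

private lemma int_mul_l {n : ℕ} {Δ : Set (Fin n → ℝ)} (hΔc : IsCompact Δ)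
    {g l : (Fin n → ℝ) → ℝ} (hlc : Continuous l) (hg : IntegrableOn g Δ) :
    IntegrableOn (fun y => g y * l y) Δ := by
  have hΔm : MeasurableSet Δ := hΔc.measurableSet
  obtain ⟨C, hC⟩ : ∃ C, ∀ y ∈ Δ, ‖l y‖ ≤ C := hΔc.exists_bound_of_continuousOn hlc.continuousOn
  refine (hg.norm.mul_const C).mono' ?_ ?_
  · exact hg.aestronglyMeasurable.mul hlc.aestronglyMeasurable.restrict
  · refine (ae_restrict_iff' hΔm).2 (Filter.Eventually.of_forall fun y hy => ?_)
    rw [norm_mul]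
    exact mul_le_mul_of_nonneg_left (hC y hy) (norm_nonneg _)

private lemma open_meets {n : ℕ} {Δ : Set (Fin n → ℝ)} (hΔconv : Convex ℝ Δ)
    (h0 : (0 : Fin n → ℝ) ∈ interior Δ) {x : Fin n → ℝ} (hx : x ∈ Δ)
    {O : Set (Fin n → ℝ)} (hO : IsOpen O) (hxO : x ∈ O) :
    (O ∩ interior Δ).Nonempty := by
  obtain ⟨ε, hε, hball⟩ := Metric.isOpen_iff.1 hO x hxO
  set δ : ℝ := min 2⁻¹ (ε / (‖x‖ + 1)) with hδ
  have hδpos : 0 < δ := lt_min (by norm_num) (div_pos hε (by positivity))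
  have hδhalf : δ ≤ 2⁻¹ := min_le_left _ _
  refine ⟨(1 - δ) • x, hball ?_, hΔconv.openSegment_self_interior_subset_interior hx h0
    ⟨1 - δ, δ, by linarith, hδpos, by ring, by simp⟩⟩
  rw [Metric.mem_ball, dist_eq_norm]
  have h1 : (1 - δ) • x - x = (-δ) • x := by
    rw [show x = (1:ℝ) • x from (one_smul ℝ x).symm, smul_smul, ← sub_smul]
    norm_num
  rw [h1, norm_smul]
  have h2 : δ * (‖x‖ + 1) ≤ ε := (le_div_iff₀ (by positivity)).1 (min_le_right _ _)
  have h3 : ‖(-δ : ℝ)‖ = δ := by rw [norm_neg, Real.norm_eq_abs, abs_of_pos hδpos]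
  rw [h3]
  nlinarith [norm_nonneg x]

private lemma zero_on {n : ℕ} {Δ : Set (Fin n → ℝ)} (hΔc : IsCompact Δ) (hΔconv : Convex ℝ Δ)
    (h0 : (0 : Fin n → ℝ) ∈ interior Δ) {F : (Fin n → ℝ) → ℝ}
    (hFc : ContinuousOn F Δ) (hae : F =ᵐ[volume.restrict Δ] 0) :
    ∀ x ∈ Δ, F x = 0 := by
  intro x hx
  by_contra hFx
  have hc : ContinuousWithinAt F Δ x := hFc x hx
  have hmem : {z : ℝ | z ≠ 0} ∈ nhds (F x) := compl_singleton_mem_nhds hFx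
  obtain ⟨O, hOopen, hxO, hsub⟩ := mem_nhdsWithin.1 (hc hmem)
  obtain ⟨z, hzO, hzint⟩ := open_meets hΔconv h0 hx hOopen hxO
  have hVopen : IsOpen (O ∩ interior Δ) := hOopen.inter isOpen_interior
  have hpos : 0 < volume (O ∩ interior Δ) := hVopen.measure_pos _ ⟨z, hzO, hzint⟩
  have hnull : volume.restrict Δ {y | F y ≠ 0} = 0 := by
    have := ae_iff.1 hae
    simpa using this
  have hzero : volume (O ∩ interior Δ) = 0 := by
    have hsub2 : O ∩ interior Δ ⊆ {y | F y ≠ 0} ∩ Δ := by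
      rintro y ⟨hyO, hyint⟩
      exact ⟨hsub ⟨hyO, interior_subset hyint⟩, interior_subset hyint⟩
    refine measure_mono_null hsub2 ?_
    rw [← Measure.restrict_apply' hΔc.measurableSet]
    exact hnull
  exact absurd hzero hpos.ne'

private lemma null_zero_set {n : ℕ} {a : Fin n → ℝ} {c : ℝ}
    (h : ¬ (∀ y : Fin n → ℝ, (∑ i, a i * y i) + c = 0)) :
    volume {y : Fin n → ℝ | (∑ i, a i * y i) + c = 0} = 0 := by
  by_cases ha : ∀ i, a i = 0
  · have hc : c ≠ 0 := by
      intro hc0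
      exact h fun y => by simp [ha, hc0]
    have hempty : {y : Fin n → ℝ | (∑ i, a i * y i) + c = 0} = ∅ := by
      ext y
      simp only [mem_setOf_eq, mem_empty_iff_false, iff_false]
      simp [ha, hc]
    simp [hempty]
  · push_neg at ha
    obtain ⟨i₀, hi₀⟩ := ha
    set ψ : (Fin n → ℝ) →ₗ[ℝ] ℝ := ∑ i, a i • LinearMap.proj i with hψdef
    have hψ : ∀ y, ψ y = ∑ i, a i * y i := by
      intro y
      simp [hψdef, LinearMap.sum_apply, LinearMap.smul_apply, LinearMap.proj_apply]
    have hψs : ψ (Pi.single i₀ 1) = a i₀ := by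
      rw [hψ]
      simp [Pi.single_apply, Finset.sum_ite_eq']
    set x₀ : Fin n → ℝ := Pi.single i₀ (-c / a i₀) with hx₀
    have hψx₀ : ψ x₀ = -c := by
      rw [hψ, hx₀]
      simp only [Pi.single_apply, mul_ite, mul_zero, Finset.sum_ite_eq', Finset.mem_univ, if_true]
      field_simp
    set W : AffineSubspace ℝ (Fin n → ℝ) := AffineSubspace.mk' x₀ (LinearMap.ker ψ) with hW
    have hWne : W ≠ ⊤ := by
      intro htop
      have hmem : x₀ + Pi.single i₀ 1 ∈ W := htop ▸ AffineSubspace.mem_top ℝ _ _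
      rw [hW, AffineSubspace.mem_mk'] at hmem
      have h0' : ψ (x₀ + Pi.single i₀ 1 -ᵥ x₀) = 0 := hmem
      rw [vsub_eq_sub, add_sub_cancel_left, hψs] at h0'
      exact hi₀ h0'
    have hsub : {y : Fin n → ℝ | (∑ i, a i * y i) + c = 0} ⊆ (W : Set (Fin n → ℝ)) := by
      intro y hy
      rw [mem_setOf_eq, ← hψ] at hy
      rw [hW, SetLike.mem_coe, AffineSubspace.mem_mk']
      show y -ᵥ x₀ ∈ LinearMap.ker ψ
      rw [vsub_eq_sub, LinearMap.mem_ker, map_sub, hψx₀]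
      linarith
    exact measure_mono_null hsub (Measure.addHaar_affineSubspace volume W hWne)

end RelDingAux

/-- With `l` the Ricci affine function of `Δ` and
`I_l(g) = -g(0) + ∫_Δ g·l dy`: `I_l(g) ≥ 0` for all integrable convex `g`
iff `l ≥ 0` on `Δ`; and in that case `I_l(g) = 0` only for affine `g`. -/
theorem relative_ding_semistable_iff {n : ℕ} (Δ : Set (Fin n → ℝ))
    (hΔc : IsCompact Δ) (hΔconv : Convex ℝ Δ)
    (h0 : (0 : Fin n → ℝ) ∈ interior Δ)
    (l : (Fin n → ℝ) → ℝ)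
    (hla : ∃ a : Fin n → ℝ, ∃ c : ℝ, ∀ y, l y = (∑ i, a i * y i) + c)
    (hl1 : ∫ y in Δ, l y = 1)
    (hlm : ∀ i : Fin n, ∫ y in Δ, y i * l y = 0) :
    ((∀ g : (Fin n → ℝ) → ℝ, ConvexOn ℝ Δ g → IntegrableOn g Δ →
        0 ≤ -g 0 + ∫ y in Δ, g y * l y) ↔ ∀ y ∈ Δ, 0 ≤ l y) ∧
    ((∀ y ∈ Δ, 0 ≤ l y) →
      ∀ g : (Fin n → ℝ) → ℝ, ConvexOn ℝ Δ g → ContinuousOn g Δ →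
        IntegrableOn g Δ →
        -g 0 + (∫ y in Δ, g y * l y) = 0 →
        ∃ a : Fin n → ℝ, ∃ c : ℝ, ∀ y ∈ Δ, g y = (∑ i, a i * y i) + c) := by
  obtain ⟨a₀, c₀, hla'⟩ := hla
  have hlc : Continuous l := by
    rw [show l = fun y => (∑ i, a₀ i * y i) + c₀ from funext hla']
    exact aff_continuous a₀ c₀
  have hΔm : MeasurableSet Δ := hΔc.measurableSet
  constructor
  · constructor
    · -- Forward: semistability implies l ≥ 0 on Δ
      intro hI
      by_contra hneg
      push_neg at hneg
      obtain ⟨y₀, hy₀, hly₀⟩ := hneg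
      set g : (Fin n → ℝ) → ℝ := fun y => max (-(l y)) 0 with hgdef
      have hlcomb : ∀ (x y : Fin n → ℝ) (p q : ℝ), p + q = 1 →
          l (p • x + q • y) = p * l x + q * l y := by
        intro x y p q hpq
        rw [hla' _, hla' x, hla' y]
        exact aff_comb a₀ c₀ x y hpq
      have hgconv : ConvexOn ℝ Δ g := by
        refine ⟨hΔconv, fun x hx y hy p q hp hq hpq => ?_⟩
        simp only [hgdef, smul_eq_mul]
        refine max_le ?_ ?_
        · rw [hlcomb x y p q hpq]
          have hx1 : -(l x) ≤ max (-(l x)) 0 := le_max_left _ _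
          have hy1 : -(l y) ≤ max (-(l y)) 0 := le_max_left _ _
          nlinarith
        · have hx1 : (0:ℝ) ≤ max (-(l x)) 0 := le_max_right _ _
          have hy1 : (0:ℝ) ≤ max (-(l y)) 0 := le_max_right _ _
          nlinarith
      have hgc : Continuous g := hlc.neg.max continuous_const
      have hgint : IntegrableOn g Δ := hgc.continuousOn.integrableOn_compact hΔc
      have hI0 := hI g hgconv hgint
      have hnonpos : ∀ y, g y * l y ≤ 0 := by
        intro y
        rcases le_or_gt (l y) 0 with h | h
        · have hgy : 0 ≤ g y := le_max_right _ _
          nlinarith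
        · have hgy : g y = 0 := max_eq_right (by linarith)
          simp [hgy]
      set V : Set (Fin n → ℝ) := {y | l y < 0} ∩ interior Δ with hV
      have hOopen : IsOpen {y : Fin n → ℝ | l y < 0} := isOpen_lt hlc continuous_const
      have hVopen : IsOpen V := hOopen.inter isOpen_interior
      have hVne : V.Nonempty := open_meets hΔconv h0 hy₀ hOopen hly₀
      have hVsub : V ⊆ Δ := fun y hy => interior_subset hy.2
      have hintgl : IntegrableOn (fun y => g y * l y) Δ := int_mul_l hΔc hlc hgint
      have hVneg : ∫ y in V, g y * l y < 0 := by
        have hposint : 0 < ∫ y in V, -(g y * l y) := by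
          rw [setIntegral_pos_iff_support_of_nonneg_ae
            (Filter.Eventually.of_forall fun y => neg_nonneg.2 (hnonpos y))
            ((hintgl.mono_set hVsub).neg)]
          refine lt_of_lt_of_le (hVopen.measure_pos volume hVne) (measure_mono ?_)
          intro y hy
          refine ⟨?_, hy⟩
          have hly : l y < 0 := hy.1
          have hgy : g y = -(l y) := max_eq_left (by linarith)
          simp only [Function.mem_support]
          rw [hgy]
          intro hzero
          nlinarith
        rw [integral_neg] at hposint
        linarith
      have htotal : ∫ y in Δ, g y * l y < 0 := by
        have hsplitΔ : Δ = V ∪ (Δ \ V) := (Set.union_diff_cancel hVsub).symm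
        rw [show (∫ y in Δ, g y * l y) = ∫ y in V ∪ (Δ \ V), g y * l y from by rw [← hsplitΔ]]
        rw [setIntegral_union Set.disjoint_sdiff_right (hΔm.diff hVopen.measurableSet)
          (hintgl.mono_set hVsub) (hintgl.mono_set Set.diff_subset)]
        have h2 : ∫ y in Δ \ V, g y * l y ≤ 0 :=
          setIntegral_nonpos (hΔm.diff hVopen.measurableSet) fun y _ => hnonpos y
        linarith
      have hg0 : 0 ≤ g 0 := le_max_right _ _
      linarith
    · -- Backward: l ≥ 0 implies semistability
      intro hl g hgconv hgint
      obtain ⟨A, hA⟩ := exists_support hΔconv h0 hgconv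
      have hintgl : IntegrableOn (fun y => g y * l y) Δ := int_mul_l hΔc hlc hgint
      have hinthl : IntegrableOn (fun y => ((∑ i, A i * y i) + g 0) * l y) Δ :=
        ((aff_continuous A (g 0)).mul hlc).continuousOn.integrableOn_compact hΔc
      have hmono : ∫ y in Δ, ((∑ i, A i * y i) + g 0) * l y ≤ ∫ y in Δ, g y * l y := by
        refine setIntegral_mono_on hinthl hintgl hΔm fun y hy => ?_
        exact mul_le_mul_of_nonneg_right (by have := hA y hy; linarith) (hl y hy)
      rw [integral_aff hΔc hlc hl1 hlm A (g 0)] at hmono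
      linarith
  · -- Equality case
    intro hl g hgconv hgcont hgint hIzero
    obtain ⟨A, hA⟩ := exists_support hΔconv h0 hgconv
    refine ⟨A, g 0, ?_⟩
    set F : (Fin n → ℝ) → ℝ := fun y => g y - ((∑ i, A i * y i) + g 0) with hF
    have hintgl : IntegrableOn (fun y => g y * l y) Δ := int_mul_l hΔc hlc hgint
    have hinthl : IntegrableOn (fun y => ((∑ i, A i * y i) + g 0) * l y) Δ :=
      ((aff_continuous A (g 0)).mul hlc).continuousOn.integrableOn_compact hΔc
    have hintF : IntegrableOn (fun y => F y * l y) Δ := by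
      have heq : (fun y => F y * l y)
          = fun y => g y * l y - ((∑ i, A i * y i) + g 0) * l y := by
        funext y; simp only [hF]; ring
      rw [heq]; exact hintgl.sub hinthl
    have hFint0 : ∫ y in Δ, F y * l y = 0 := by
      have heq2 : ∫ y in Δ, F y * l y
          = (∫ y in Δ, g y * l y) - ∫ y in Δ, ((∑ i, A i * y i) + g 0) * l y := by
        rw [← integral_sub hintgl hinthl]
        congr 1
        funext y
        simp only [hF]; ring
      rw [heq2, integral_aff hΔc hlc hl1 hlm A (g 0)]
      linarith
    have hFnonneg : 0 ≤ᵐ[volume.restrict Δ] fun y => F y * l y :=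
      (ae_restrict_iff' hΔm).2 (Filter.Eventually.of_forall fun y hy =>
        mul_nonneg (by have := hA y hy; simp only [hF]; linarith) (hl y hy))
    have hFlae : (fun y => F y * l y) =ᵐ[volume.restrict Δ] 0 :=
      (integral_eq_zero_iff_of_nonneg_ae hFnonneg hintF).1 hFint0
    have hlnz : ∀ᵐ y ∂(volume.restrict Δ), l y ≠ 0 := by
      have hnull : volume {y : Fin n → ℝ | l y = 0} = 0 := by
        have hset : {y : Fin n → ℝ | l y = 0}
            = {y : Fin n → ℝ | (∑ i, a₀ i * y i) + c₀ = 0} := by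
          ext y; simp [hla' y]
        rw [hset]
        refine null_zero_set ?_
        intro hall
        have hl0 : ∀ y, l y = 0 := fun y => by rw [hla' y, hall y]
        have hbad : (1:ℝ) = 0 := by
          rw [← hl1, show l = fun _ => (0:ℝ) from funext hl0]
          simp
        norm_num at hbad
      rw [ae_iff]
      simp only [not_not]
      rw [Measure.restrict_apply' hΔm]
      exact measure_mono_null Set.inter_subset_left hnull
    have hFae : F =ᵐ[volume.restrict Δ] 0 := by
      filter_upwards [hFlae, hlnz] with y h1 h2
      have h3 : F y * l y = 0 := by simpa using h1
      rcases mul_eq_zero.1 h3 with h | h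
      · simpa using h
      · exact absurd h h2
    have hFcont : ContinuousOn F Δ := hgcont.sub (aff_continuous A (g 0)).continuousOn
    have hzero := zero_on hΔc hΔconv h0 hFcont hFae
    intro y hy
    have h4 := hzero y hy
    simp only [hF] at h4
    linarith
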